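/- Let u ∈ A_q^k be a sequence in which the number of nonzero entries is even. For 0 ≤ j ≤ k, let u'_j be u with the first j symbols negated, and let φ(x) = sign(x) ∈ {-1,0,+1}. Then there exists z ∈ {0,1,...,k-1} such that ∑_i φ((u'_z)_i) = 0, i.e., u'_z is polarity-balanced. -/
import Mathlib


/-- The symmetric q-ary PAM alphabet `A_q = {-q+1, -q+3, ..., q-3, q-1}`. -/
def Aq (q : ℕ) : Finset ℤ := (Finset.range q).image fun j : ℕ => (q : ℤ) - 1 - 2 * (j : ℤ)

/-- Discrete intermediate value: a sequence of even integers with steps in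
`{-2,0,2}` that starts positive and ends negative must hit zero. -/
lemma ivt_aux (g : ℕ → ℤ)
    (hstep : ∀ j, g (j+1) = g j ∨ g (j+1) = g j + 2 ∨ g (j+1) = g j - 2)
    (heven : ∀ j, Even (g j)) :
    ∀ n, 0 < g 0 → g n < 0 → ∃ j < n, g j = 0 := by
  intro n
  induction n with
  | zero => intro h0 hn; omega
  | succ n ih =>
    intro h0 hn
    rcases lt_trichotomy (g n) 0 with h | h | h
    · obtain ⟨j, hj, hj0⟩ := ih h0 h
      exact ⟨j, Nat.lt_succ_of_lt hj, hj0⟩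
    · exact ⟨n, Nat.lt_succ_self n, h⟩
    · obtain ⟨m, hm⟩ := heven n
      have := hstep n
      omega

theorem exists_polarity_balancing_index (q k : ℕ) (hq : 2 ≤ q)
    (u : Fin k → ℤ) (hu : ∀ i, u i ∈ Aq q)
    (heven : Even (Finset.univ.filter fun i : Fin k => u i ≠ 0).card) :
    ∃ z, z ≤ k - 1 ∧
      ∑ i : Fin k, Int.sign (if (i : ℕ) < z then -u i else u i) = 0 := by
  set g : ℕ → ℤ := fun j => ∑ i : Fin k, Int.sign (if (i : ℕ) < j then -u i else u i)
    with hg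
  -- sign trichotomy helper
  have hsgn : ∀ x : ℤ, Int.sign x = 1 ∨ Int.sign x = 0 ∨ Int.sign x = -1 := by
    intro x
    rcases lt_trichotomy x 0 with h | h | h
    · right; right; exact Int.sign_eq_neg_one_of_neg h
    · right; left; simp [h]
    · left; exact Int.sign_eq_one_of_pos h
  -- step property
  have hstep : ∀ j, g (j+1) = g j ∨ g (j+1) = g j + 2 ∨ g (j+1) = g j - 2 := by
    intro j
    by_cases hj : j < k
    · have hdiff : g (j+1) - g j
          = Int.sign (-(u ⟨j, hj⟩)) - Int.sign (u ⟨j, hj⟩) := by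
        rw [hg]
        rw [← Finset.sum_sub_distrib]
        rw [Finset.sum_eq_single (⟨j, hj⟩ : Fin k)]
        · simp
        · intro b _ hb
          have hbj : (b : ℕ) ≠ j := fun h => hb (Fin.ext h)
          have h1 : ((b : ℕ) < j + 1) = ((b : ℕ) < j) := by
            apply propext; omega
          simp only [h1, sub_self]
        · intro h; exact absurd (Finset.mem_univ _) h
      rw [Int.sign_neg] at hdiff
      rcases hsgn (u ⟨j, hj⟩) with h | h | h <;> rw [h] at hdiff <;> omega
    · left
      rw [hg]
      apply Finset.sum_congr rfl
      intro i _
      have hik : (i : ℕ) < k := i.isLt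
      have h1 : (i : ℕ) < j + 1 := by omega
      have h2 : (i : ℕ) < j := by omega
      rw [if_pos h1, if_pos h2]
  -- evenness
  have heven0 : Even (g 0) := by
    have hsum : Even ((∑ i : Fin k, Int.sign (u i))
        + ((Finset.univ.filter fun i : Fin k => u i ≠ 0).card : ℤ)) := by
      rw [Finset.card_filter]
      push_cast
      rw [← Finset.sum_add_distrib]
      apply Finset.even_sum
      intro i _
      by_cases h : u i = 0
      · simp [h]
      · rcases hsgn (u i) with hs | hs | hs
        · rw [hs, if_pos h]; decide
        · exact absurd (Int.sign_eq_zero_iff_zero.mp hs) h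
        · rw [hs, if_pos h]; decide
    have hcard : Even ((Finset.univ.filter fun i : Fin k => u i ≠ 0).card : ℤ) := by
      exact_mod_cast heven.natCast (α := ℤ)
    have hg0 : g 0 = ∑ i : Fin k, Int.sign (u i) := by
      rw [hg]; simp
    obtain ⟨a, ha⟩ := hsum
    obtain ⟨b, hb⟩ := hcard
    exact ⟨a - b, by omega⟩
  have hevenall : ∀ j, Even (g j) := by
    intro j
    induction j with
    | zero => exact heven0
    | succ n ih =>
      obtain ⟨m, hm⟩ := ih
      have := hstep n
      rcases this with h | h | h
      · exact ⟨m, by omega⟩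
      · exact ⟨m + 1, by omega⟩
      · exact ⟨m - 1, by omega⟩
  -- end value
  have hk : g k = - g 0 := by
    rw [hg]
    simp only
    rw [← Finset.sum_neg_distrib]
    apply Finset.sum_congr rfl
    intro i _
    rw [if_pos i.isLt]
    simp [Int.sign_neg]
  rcases lt_trichotomy (g 0) 0 with h0 | h0 | h0
  · -- g 0 < 0 : apply ivt to -g
    have hk' : (fun j => -(g j)) k < 0 := by simp [hk]; omega
    obtain ⟨j, hjk, hj0⟩ := ivt_aux (fun j => -(g j))
      (by intro j; rcases hstep j with h | h | h <;> simp [h] <;> omega)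
      (by intro j; exact (hevenall j).neg) k (by simpa using h0.le.lt_of_ne (by omega)) hk'
    refine ⟨j, by omega, ?_⟩
    have : g j = 0 := by simpa using hj0
    exact this
  · exact ⟨0, Nat.zero_le _, h0⟩
  · have hk' : g k < 0 := by omega
    obtain ⟨j, hjk, hj0⟩ := ivt_aux g hstep hevenall k h0 hk'
    exact ⟨j, by omega, hj0⟩
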